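/- Projection Theorem (Theorem 3.2, Hilbert-space form). Assume Hypothesis (SL). Then for every n ∈ ℤ^D with n ≠ 0, the set of speeds { v ∈ ℝ \ {0} : there exists ψ ∈ H, ψ ≠ 0, with ⟨Ω, ψ⟩ = 0 and U(n, ‖n‖₁/v)ψ = ψ } is countable; in particular it has Lebesgue measure zero, so for almost every v the subspace of vectors invariant under U(n, ‖n‖₁/v) is exactly the scalar multiples of Ω. -/

import Mathlib

open Filter MeasureTheory Topology

noncomputable def l1 {D : ℕ} (n : Fin D → ℤ) : ℝ := ∑ i, |(n i : ℝ)|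

variable {D : ℕ} {H : Type*} [NormedAddCommGroup H] [InnerProductSpace ℂ H]
  [CompleteSpace H] [TopologicalSpace.SeparableSpace H]

lemma fix_add (U : (Fin D → ℤ) × ℝ → H ≃ₗᵢ[ℂ] H)
    (hUadd : ∀ p q : (Fin D → ℤ) × ℝ, U (p + q) = (U q).trans (U p))
    {p q : (Fin D → ℤ) × ℝ} {x : H} (hp : U p x = x) (hq : U q x = x) :
    U (p + q) x = x := by
  rw [hUadd]
  simp [LinearIsometryEquiv.trans_apply, hq, hp]

lemma fix_neg (U : (Fin D → ℤ) × ℝ → H ≃ₗᵢ[ℂ] H)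
    (hU0 : U 0 = LinearIsometryEquiv.refl ℂ H)
    (hUadd : ∀ p q : (Fin D → ℤ) × ℝ, U (p + q) = (U q).trans (U p))
    {p : (Fin D → ℤ) × ℝ} {x : H} (hp : U p x = x) : U (-p) x = x := by
  apply (U p).injective
  have h : U (p + -p) x = x := by rw [add_neg_cancel, hU0]; rfl
  rw [hUadd] at h
  simp only [LinearIsometryEquiv.trans_apply] at h
  rw [hp]
  exact h

lemma fix_zsmul (U : (Fin D → ℤ) × ℝ → H ≃ₗᵢ[ℂ] H)
    (hU0 : U 0 = LinearIsometryEquiv.refl ℂ H)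
    (hUadd : ∀ p q : (Fin D → ℤ) × ℝ, U (p + q) = (U q).trans (U p))
    {p : (Fin D → ℤ) × ℝ} {x : H} (hp : U p x = x) (k : ℤ) : U (k • p) x = x := by
  induction k using Int.induction_on with
  | zero => rw [zero_smul, hU0]; rfl
  | succ k ih =>
      have h : ((k : ℤ) + 1) • p = (k : ℤ) • p + p := by rw [add_smul, one_smul]
      rw [h]
      exact fix_add U hUadd ih hp
  | pred k ih =>
      have h : (-(k : ℤ) - 1) • p = (-(k : ℤ)) • p + -p := by
        rw [sub_smul, one_smul, sub_eq_add_neg]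
      rw [h]
      exact fix_add U hUadd ih (fix_neg U hU0 hUadd hp)

lemma ortho_of_distinct_times (U : (Fin D → ℤ) × ℝ → H ≃ₗᵢ[ℂ] H)
    (hU0 : U 0 = LinearIsometryEquiv.refl ℂ H)
    (hUadd : ∀ p q : (Fin D → ℤ) × ℝ, U (p + q) = (U q).trans (U p))
    (Ω : H) (vc : ℝ) (hvc : 0 < vc)
    (hSL : ∀ (m : Fin D → ℤ) (t : ℝ), m ≠ 0 → vc * |t| < l1 m →
      ∀ ψ : H, U (m, t) ψ = ψ → ∃ c : ℂ, ψ = c • Ω)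
    (n : Fin D → ℤ) (hn : n ≠ 0) (hl1 : 0 < l1 n)
    {t t' : ℝ} (htt : t ≠ t')
    {ψ φ : H} (hψΩ : (inner ℂ Ω ψ : ℂ) = 0)
    (hψ : U (n, t) ψ = ψ) (hφ : U (n, t') φ = φ) :
    (inner ℂ ψ φ : ℂ) = 0 := by
  set Δ : ℝ := t - t' with hΔdef
  have hΔ : Δ ≠ 0 := sub_ne_zero.2 htt
  set f : H →L[ℂ] H := (U ((0 : Fin D → ℤ), Δ)).toLinearIsometry.toContinuousLinearMap with hfdef
  have hf_apply : ∀ x : H, f x = U ((0 : Fin D → ℤ), Δ) x := fun _ => rfl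
  have hfnorm : ‖f‖ ≤ 1 := by
    apply ContinuousLinearMap.opNorm_le_bound _ zero_le_one
    intro x; rw [hf_apply, one_mul]; exact le_of_eq ((U _).norm_map x)
  -- iterates of f
  have hiter : ∀ (k : ℕ) (x : H), f^[k] x = U ((k : ℤ) • ((0 : Fin D → ℤ), Δ)) x := by
    intro k
    induction k with
    | zero => intro x; simp only [Function.iterate_zero, id_eq, Nat.cast_zero, zero_smul, hU0]; rfl
    | succ k ih =>
        intro x
        rw [Function.iterate_succ_apply', ih, hf_apply]
        have h : ((k + 1 : ℕ) : ℤ) • ((0 : Fin D → ℤ), Δ)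
            = ((0 : Fin D → ℤ), Δ) + (k : ℤ) • ((0 : Fin D → ℤ), Δ) := by
          push_cast
          rw [add_smul, one_smul, add_comm]
        rw [h, hUadd]
        simp [LinearIsometryEquiv.trans_apply]
  -- inner ℂ products with ψ are invariant along the orbit
  have hinner : ∀ k : ℕ, (inner ℂ ψ (f^[k] φ) : ℂ) = inner ℂ ψ φ := by
    intro k
    have hab : ((0 : Fin D → ℤ), Δ) = ((n, t) : (Fin D → ℤ) × ℝ) - (n, t') := by
      rw [Prod.mk_sub_mk, sub_self]
    have h1 : (k : ℤ) • ((0 : Fin D → ℤ), Δ)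
        = (k : ℤ) • ((n, t) : (Fin D → ℤ) × ℝ) + -((k : ℤ) • ((n, t') : (Fin D → ℤ) × ℝ)) := by
      rw [hab, smul_sub, sub_eq_add_neg]
    have hφneg : U (-((k : ℤ) • ((n, t') : (Fin D → ℤ) × ℝ))) φ = φ := by
      rw [← neg_smul]
      exact fix_zsmul U hU0 hUadd hφ (-(k : ℤ))
    have h2 : U ((k : ℤ) • ((0 : Fin D → ℤ), Δ)) φ
        = U ((k : ℤ) • ((n, t) : (Fin D → ℤ) × ℝ)) φ := by
      rw [h1, hUadd]
      simp only [LinearIsometryEquiv.trans_apply]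
      rw [hφneg]
    rw [hiter, h2]
    calc (inner ℂ ψ (U ((k : ℤ) • ((n, t) : (Fin D → ℤ) × ℝ)) φ) : ℂ)
        = inner ℂ (U ((k : ℤ) • ((n, t) : (Fin D → ℤ) × ℝ)) ψ)
            (U ((k : ℤ) • ((n, t) : (Fin D → ℤ) × ℝ)) φ) := by
          rw [fix_zsmul U hU0 hUadd hψ (k : ℤ)]
      _ = inner ℂ ψ φ := (U _).inner_map_map ψ φ
  -- the ergodic average limit
  set Q : H := ((f.eqLocus (1 : H →L[ℂ] H)).orthogonalProjectionOnto φ : H) with hQdef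
  have hten : Tendsto (fun N => birkhoffAverage ℂ f id N φ) atTop (𝓝 Q) :=
    f.tendsto_birkhoffAverage_orthogonalProjection hfnorm φ
  have h3 : (inner ℂ ψ Q : ℂ) = inner ℂ ψ φ := by
    have t1 : Tendsto (fun N => (inner ℂ ψ (birkhoffAverage ℂ f id N φ) : ℂ)) atTop
        (𝓝 (inner ℂ ψ Q)) := tendsto_const_nhds.inner hten
    have t2 : ∀ᶠ N : ℕ in atTop,
        (inner ℂ ψ (birkhoffAverage ℂ f id N φ) : ℂ) = inner ℂ ψ φ := by
      filter_upwards [eventually_ge_atTop 1] with N hN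
      have hNne : (N : ℂ) ≠ 0 := Nat.cast_ne_zero.2 (by omega)
      simp only [birkhoffAverage, birkhoffSum, id_eq, inner_smul_right, inner_sum, hinner]
      rw [Finset.sum_const, Finset.card_range, nsmul_eq_mul]
      field_simp
    have t3 : Tendsto (fun N : ℕ => (inner ℂ ψ (birkhoffAverage ℂ f id N φ) : ℂ)) atTop
        (𝓝 (inner ℂ ψ φ)) := by
      rw [tendsto_congr' t2]
      exact tendsto_const_nhds
    exact tendsto_nhds_unique t1 t3
  -- Q is fixed by U (0, Δ)
  have hQf : U ((0 : Fin D → ℤ), Δ) Q = Q := by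
    have hm : Q ∈ f.eqLocus (1 : H →L[ℂ] H) := ((f.eqLocus (1 : H →L[ℂ] H)).orthogonalProjectionOnto φ).2
    have h := LinearMap.mem_eqLocus.1 hm
    rw [← hf_apply]
    simpa using h
  -- U (n, t') commutes with the iterates of f
  have hcomm : ∀ (k : ℕ) (x : H), U (n, t') (f^[k] x) = f^[k] (U (n, t') x) := by
    intro k x
    rw [hiter, hiter]
    calc U (n, t') (U ((k : ℤ) • ((0 : Fin D → ℤ), Δ)) x)
        = U (((n, t') : (Fin D → ℤ) × ℝ) + (k : ℤ) • ((0 : Fin D → ℤ), Δ)) x := by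
          rw [hUadd]; simp [LinearIsometryEquiv.trans_apply]
      _ = U ((k : ℤ) • ((0 : Fin D → ℤ), Δ) + ((n, t') : (Fin D → ℤ) × ℝ)) x := by
          rw [add_comm]
      _ = U ((k : ℤ) • ((0 : Fin D → ℤ), Δ)) (U (n, t') x) := by
          rw [hUadd]; simp [LinearIsometryEquiv.trans_apply]
  -- Q is fixed by U (n, t')
  have hQb : U (n, t') Q = Q := by
    have hclosed : IsClosed {x : H | U (n, t') x = x} :=
      isClosed_eq (U (n, t')).continuous continuous_id
    refine hclosed.mem_of_tendsto hten (Eventually.of_forall fun N => ?_)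
    show U (n, t') (birkhoffAverage ℂ f id N φ) = birkhoffAverage ℂ f id N φ
    simp only [birkhoffAverage, birkhoffSum, id_eq]
    rw [_root_.map_smul, map_sum]
    congr 1
    refine Finset.sum_congr rfl fun k _ => ?_
    rw [hcomm, hφ]
  -- Q is fixed by all integer combinations
  have hQmk : ∀ j k : ℤ,
      U (j • ((n, t') : (Fin D → ℤ) × ℝ) + k • ((0 : Fin D → ℤ), Δ)) Q = Q :=
    fun j k => fix_add U hUadd (fix_zsmul U hU0 hUadd hQb j) (fix_zsmul U hU0 hUadd hQf k)
  -- choose a space-like combination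
  obtain ⟨c, hc⟩ : ∃ c : ℂ, Q = c • Ω := by
    set M : ℕ := ⌈vc * |Δ| / l1 n⌉₊ + 1 with hM
    have hMpos : 0 < M := Nat.succ_pos _
    set k : ℤ := -round ((M : ℝ) * t' / Δ) with hk
    have hprod : ((M : ℤ) • ((n, t') : (Fin D → ℤ) × ℝ) + k • ((0 : Fin D → ℤ), Δ))
        = ((M : ℤ) • n, (M : ℝ) * t' + (k : ℝ) * Δ) := by
      refine Prod.ext ?_ ?_
      · simp
      · show (M : ℤ) • t' + k • Δ = (M : ℝ) * t' + (k : ℝ) * Δ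
        simp only [zsmul_eq_mul]
        push_cast
        ring
    have hinv : U ((M : ℤ) • n, (M : ℝ) * t' + (k : ℝ) * Δ) Q = Q := by
      rw [← hprod]; exact hQmk (M : ℤ) k
    have hmne : (M : ℤ) • n ≠ 0 := by
      intro h
      apply hn
      funext i
      have := congrFun h i
      simp only [Pi.smul_apply, smul_eq_mul, Pi.zero_apply, mul_eq_zero] at this
      rcases this with h' | h'
      · exact absurd h' (by exact_mod_cast hMpos.ne')
      · exact h'
    have hl1s : l1 ((M : ℤ) • n) = (M : ℝ) * l1 n := by
      simp only [l1, Finset.mul_sum]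
      refine Finset.sum_congr rfl fun i _ => ?_
      have h' : (((M : ℤ) • n) i : ℝ) = (M : ℝ) * (n i : ℝ) := by
        simp only [Pi.smul_apply, smul_eq_mul]
        push_cast
        ring
      rw [h', abs_mul, Nat.abs_cast]
    have hb : |(M : ℝ) * t' + (k : ℝ) * Δ| ≤ |Δ| / 2 := by
      have heq : (M : ℝ) * t' + (k : ℝ) * Δ
          = ((M : ℝ) * t' / Δ - round ((M : ℝ) * t' / Δ)) * Δ := by
        rw [hk]
        push_cast
        field_simp
        ring
      rw [heq, abs_mul]
      calc |(M : ℝ) * t' / Δ - round ((M : ℝ) * t' / Δ)| * |Δ|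
          ≤ (1 / 2) * |Δ| :=
            mul_le_mul_of_nonneg_right (abs_sub_round _) (abs_nonneg _)
        _ = |Δ| / 2 := by ring
    have hM2 : vc * |Δ| < (M : ℝ) * l1 n := by
      have h1 : vc * |Δ| / l1 n ≤ (⌈vc * |Δ| / l1 n⌉₊ : ℝ) := Nat.le_ceil _
      have h2 : (⌈vc * |Δ| / l1 n⌉₊ : ℝ) < (M : ℝ) := by
        rw [hM]; exact_mod_cast Nat.lt_succ_self _
      have h3 : vc * |Δ| = (vc * |Δ| / l1 n) * l1 n := by field_simp
      rw [h3]
      calc (vc * |Δ| / l1 n) * l1 n ≤ (⌈vc * |Δ| / l1 n⌉₊ : ℝ) * l1 n :=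
            mul_le_mul_of_nonneg_right h1 hl1.le
        _ < (M : ℝ) * l1 n := mul_lt_mul_of_pos_right h2 hl1
    have hsp : vc * |(M : ℝ) * t' + (k : ℝ) * Δ| < l1 ((M : ℤ) • n) := by
      rw [hl1s]
      have habs : 0 < |Δ| := abs_pos.2 hΔ
      calc vc * |(M : ℝ) * t' + (k : ℝ) * Δ| ≤ vc * (|Δ| / 2) :=
            mul_le_mul_of_nonneg_left hb hvc.le
        _ < vc * |Δ| := by nlinarith
        _ < (M : ℝ) * l1 n := hM2
    exact hSL _ _ hmne hsp Q hinv
  -- conclude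
  have hψΩ' : (inner ℂ ψ Ω : ℂ) = 0 := by
    rw [← inner_conj_symm, hψΩ, map_zero]
  rw [← h3, hc, inner_smul_right, hψΩ', mul_zero]

/-- **Projection Theorem** (Theorem 3.2, Hilbert-space form): under Hypothesis (SL), for each
`n ≠ 0` the set of bad speeds is countable, hence Lebesgue-null, so for almost every `v` the
`U (n, ‖n‖₁/v)`-invariant subspace consists exactly of the scalar multiples of `Ω`. -/
theorem projection_theorem
    (U : (Fin D → ℤ) × ℝ → H ≃ₗᵢ[ℂ] H)
    (hU0 : U 0 = LinearIsometryEquiv.refl ℂ H)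
    (hUadd : ∀ p q : (Fin D → ℤ) × ℝ, U (p + q) = (U q).trans (U p))
    (Ω : H) (hΩ : ‖Ω‖ = 1) (hΩinv : ∀ p, U p Ω = Ω)
    (vc : ℝ) (hvc : 0 < vc)
    (hSL : ∀ (m : Fin D → ℤ) (t : ℝ), m ≠ 0 → vc * |t| < l1 m →
      ∀ ψ : H, U (m, t) ψ = ψ → ∃ c : ℂ, ψ = c • Ω)
    (n : Fin D → ℤ) (hn : n ≠ 0) :
    Set.Countable
      {v : ℝ | v ≠ 0 ∧ ∃ ψ : H, ψ ≠ 0 ∧ (inner ℂ Ω ψ : ℂ) = 0 ∧ U (n, l1 n / v) ψ = ψ} ∧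
    volume
      {v : ℝ | v ≠ 0 ∧ ∃ ψ : H, ψ ≠ 0 ∧ (inner ℂ Ω ψ : ℂ) = 0 ∧ U (n, l1 n / v) ψ = ψ} = 0 ∧
    ∃ E : Set ℝ, volume E = 0 ∧ ∀ v : ℝ, v ∉ E →
      {ψ : H | U (n, l1 n / v) ψ = ψ} = {ψ : H | ∃ c : ℂ, ψ = c • Ω} := by
  classical
  set B := {v : ℝ | v ≠ 0 ∧ ∃ ψ : H, ψ ≠ 0 ∧ (inner ℂ Ω ψ : ℂ) = 0 ∧ U (n, l1 n / v) ψ = ψ}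
    with hBdef
  have hl1 : 0 < l1 n := by
    obtain ⟨i, hi⟩ : ∃ i, n i ≠ 0 := by
      by_contra h
      push_neg at h
      exact hn (funext h)
    have hpos : (0 : ℝ) < |(n i : ℝ)| := abs_pos.2 (by exact_mod_cast hi)
    have hle : |(n i : ℝ)| ≤ ∑ j, |(n j : ℝ)| :=
      Finset.single_le_sum (fun j _ => abs_nonneg ((n j : ℝ))) (Finset.mem_univ i)
    have : l1 n = ∑ j, |(n j : ℝ)| := rfl
    rw [this]
    exact lt_of_lt_of_le hpos hle
  have hΩΩ : (inner ℂ Ω Ω : ℂ) = 1 := by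
    rw [inner_self_eq_norm_sq_to_K, hΩ]
    norm_num
  -- countability
  have hcount : B.Countable := by
    have hch : ∀ v : ℝ, v ∈ B →
        ∃ ψ : H, ψ ≠ 0 ∧ (inner ℂ Ω ψ : ℂ) = 0 ∧ U (n, l1 n / v) ψ = ψ := fun v hv => hv.2
    choose! ψw hψw0 hψwΩ hψwU using hch
    set χ : ℝ → H := fun v => ((‖ψw v‖⁻¹ : ℝ) : ℂ) • ψw v with hχdef
    have hχ1 : ∀ v ∈ B, ‖χ v‖ = 1 := by
      intro v hv
      rw [hχdef]
      simp only [norm_smul, Complex.norm_real, Real.norm_eq_abs, abs_inv, abs_norm]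
      exact inv_mul_cancel₀ (norm_ne_zero_iff.2 (hψw0 v hv))
    have hχort : ∀ v ∈ B, ∀ w ∈ B, v ≠ w → (inner ℂ (χ v) (χ w) : ℂ) = 0 := by
      intro v hv w hw hvw
      have htt : l1 n / v ≠ l1 n / w := by
        intro h
        apply hvw
        rw [div_eq_div_iff (by exact_mod_cast hv.1) (by exact_mod_cast hw.1)] at h
        have := mul_left_cancel₀ hl1.ne' h
        exact this.symm
      have h0 : (inner ℂ (ψw v) (ψw w) : ℂ) = 0 :=
        ortho_of_distinct_times U hU0 hUadd Ω vc hvc hSL n hn hl1 htt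
          (hψwΩ v hv) (hψwU v hv) (hψwU w hw)
      rw [hχdef]
      simp only [inner_smul_left, inner_smul_right, h0, mul_zero]
    have hdisj : B.PairwiseDisjoint (fun v => Metric.ball (χ v) (1 / 2)) := by
      intro v hv w hw hvw
      apply Metric.ball_disjoint_ball
      have h2 : ‖χ v - χ w‖ ^ 2 = 2 := by
        rw [@norm_sub_sq ℂ, hχ1 v hv, hχ1 w hw, hχort v hv w hw hvw]
        norm_num
      have h1 : (1 : ℝ) ≤ ‖χ v - χ w‖ := by nlinarith [norm_nonneg (χ v - χ w)]
      rw [dist_eq_norm]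
      linarith
    exact hdisj.countable_of_isOpen (fun v _ => Metric.isOpen_ball)
      (fun v _ => ⟨χ v, Metric.mem_ball_self (by norm_num)⟩)
  refine ⟨hcount, hcount.measure_zero _, B, hcount.measure_zero _, ?_⟩
  intro v hv
  ext ψ
  simp only [Set.mem_setOf_eq]
  constructor
  · intro hψ
    set ψ' : H := ψ - (inner ℂ Ω ψ : ℂ) • Ω with hψ'def
    have hψ'Ω : (inner ℂ Ω ψ' : ℂ) = 0 := by
      rw [hψ'def, inner_sub_right, inner_smul_right, hΩΩ, mul_one, sub_self]
    have hψ'U : U (n, l1 n / v) ψ' = ψ' := by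
      rw [hψ'def, map_sub, _root_.map_smul, hΩinv, hψ]
    have hψ'0 : ψ' = 0 := by
      by_contra h0
      rcases eq_or_ne v 0 with rfl | hv0
      · obtain ⟨c, hc⟩ := hSL n (l1 n / 0) hn (by simp [hl1]) ψ' hψ'U
        rw [hc, inner_smul_right, hΩΩ, mul_one] at hψ'Ω
        rw [hc, hψ'Ω, zero_smul] at h0
        exact h0 rfl
      · exact hv ⟨hv0, ψ', h0, hψ'Ω, hψ'U⟩
    refine ⟨inner ℂ Ω ψ, ?_⟩
    have := sub_eq_zero.1 hψ'0
    exact this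
  · rintro ⟨c, rfl⟩
    rw [_root_.map_smul, hΩinv]
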